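/- (Lemma 5.4, pointwise form) With the pointwise model of a submanifold of a quaternionic Kähler manifold below, assume P ∘ P = −cos²θ · id_W for some θ ∈ (0, π/2) (the proper slant condition), that every vector of W^⊥ lies in the range of F (minimal codimension), and let h : W × W → W^⊥ be a symmetric bilinear map (the second fundamental form at the point) satisfying the quaternionic slant condition ⟨h(x, z), Fy⟩ = ⟨h(x, y), Fz⟩ for all x, y, z ∈ W (i.e. A_{Fy} z = A_{Fz} y). Then B maps the orthogonal complement of the first normal space onto the relative null space: B({ u ∈ W^⊥ : ⟨h(x, y), u⟩ = 0 for all x, y ∈ W }) = { z ∈ W : h(z, y) = 0 for all y ∈ W }. -/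

import Mathlib

open RealInnerProductSpace

/-- **Lemma 5.4 (pointwise form).** In the pointwise model of a quaternionic slant submanifold
of a quaternionic Kähler manifold of minimal codimension, `B` maps the orthogonal complement of
the first normal space onto the relative null space:
`B({ u : ⟪h(x,y), u⟫ = 0 ∀ x y }) = { z : h(z, ·) = 0 }`. -/
theorem pointwise_lemma54
    {V : Type*} [NormedAddCommGroup V] [InnerProductSpace ℝ V] [FiniteDimensional ℝ V]
    (J : V →ₗ[ℝ] V) (hJinner : ∀ x y : V, ⟪J x, J y⟫ = ⟪x, y⟫)
    (hJ2 : ∀ x : V, J (J x) = -x)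
    (W : Submodule ℝ V)
    (P : W → W) (F : W → Wᗮ) (B : Wᗮ → W) (C : Wᗮ → Wᗮ)
    (hPdef : ∀ x : W, P x = Submodule.orthogonalProjectionOnto W (J x))
    (hFdef : ∀ x : W, F x = Submodule.orthogonalProjectionOnto Wᗮ (J x))
    (hBdef : ∀ u : Wᗮ, B u = Submodule.orthogonalProjectionOnto W (J u))
    (hCdef : ∀ u : Wᗮ, C u = Submodule.orthogonalProjectionOnto Wᗮ (J u))
    (θ : ℝ) (hθ : θ ∈ Set.Ioo 0 (Real.pi / 2))
    (hslant : ∀ x : W, P (P x) = -(Real.cos θ ^ 2) • x)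
    (hFsurj : ∀ u : Wᗮ, ∃ x : W, F x = u)
    (h : W →ₗ[ℝ] W →ₗ[ℝ] Wᗮ) (hsymm : ∀ x y : W, h x y = h y x)
    (hqslant : ∀ x y z : W, ⟪h x z, F y⟫ = ⟪h x y, F z⟫) :
    B '' {u : Wᗮ | ∀ x y : W, ⟪h x y, u⟫ = 0} = {z : W | ∀ y : W, h z y = 0} := by
  have hsinpos : 0 < Real.sin θ :=
    Real.sin_pos_of_pos_of_lt_pi hθ.1 (lt_trans hθ.2 (by linarith [Real.pi_pos]))
  have hsin2 : (Real.sin θ) ^ 2 ≠ 0 := pow_ne_zero _ (ne_of_gt hsinpos)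
  -- key identity : B (F x) = -(sin² θ) • x
  have key : ∀ x : W, B (F x) = -(Real.sin θ ^ 2) • x := by
    intro x
    have hdecomp : ((P x : V)) + ((F x : V)) = J x := by
      rw [hPdef, hFdef]
      exact W.starProjection_add_starProjection_orthogonal (J (x : V))
    have hJJ : J ((P x : V)) + J ((F x : V)) = -(x : V) := by
      rw [← map_add, hdecomp, hJ2]
    have hproj : P (P x) + B (F x) = -x := by
      have h1 := congrArg (Submodule.orthogonalProjectionOnto W) hJJ
      rw [map_add, map_neg, Submodule.orthogonalProjectionOnto_mem_subspace_eq_self x] at h1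
      rw [hPdef (P x), hBdef (F x)]
      exact h1
    have h2 : B (F x) = -x - P (P x) := by
      rw [← hproj]; abel
    rw [h2, hslant x, Real.sin_sq]
    module
  -- a normal vector orthogonal to all F z is zero
  have Fzero : ∀ u : Wᗮ, (∀ y : W, ⟪u, F y⟫ = 0) → u = 0 := by
    intro u hu
    obtain ⟨w, hw⟩ := hFsurj u
    have := hu w
    rw [hw] at this
    exact inner_self_eq_zero.mp this
  ext z
  simp only [Set.mem_image, Set.mem_setOf_eq]
  constructor
  · rintro ⟨u, hu, rfl⟩
    obtain ⟨x₀, hx₀⟩ := hFsurj u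
    have hnull : ∀ x : W, h x₀ x = 0 := by
      intro x
      apply Fzero
      intro y
      rw [hsymm x₀ x, hqslant x y x₀, hx₀]
      exact hu x y
    intro y
    rw [← hx₀, key, neg_smul, map_neg, map_smul, LinearMap.neg_apply, LinearMap.smul_apply,
      hnull y, smul_zero, neg_zero]
  · intro hz
    refine ⟨F ((-(Real.sin θ ^ 2)⁻¹) • z), ?_, ?_⟩
    · intro x y
      rw [hqslant x ((-(Real.sin θ ^ 2)⁻¹) • z) y]
      have hxz : h x z = 0 := by rw [hsymm]; exact hz x
      rw [map_smul, hxz, smul_zero, inner_zero_left]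
    · rw [key, smul_smul]
      rw [show -(Real.sin θ ^ 2) * -(Real.sin θ ^ 2)⁻¹ = 1 by field_simp]
      exact one_smul _ _
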